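/- Let k be a finite field with |k| > 9 and n ≥ 2. Let pgl_n(k) = gl_n(k)/(scalars) and let psl_n(k) be the image of sl_n(k) in pgl_n(k). Then every non-zero additive subgroup H of pgl_n(k) invariant under conjugation by SL_n(k) contains psl_n(k). -/

import Mathlib

set_option linter.unusedSectionVars false

open Matrix Finset

section aux
variable {k : Type*} [Field k] [Fintype k] [DecidableEq k]

lemma sum_zpow_eq_zero' {e : ℤ} (hu : ∃ u : kˣ, u ^ e ≠ 1) :
    ∑ t : kˣ, ((t ^ e : kˣ) : k) = 0 := by
  obtain ⟨u, hu⟩ := hu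
  set S := ∑ t : kˣ, ((t ^ e : kˣ) : k) with hS
  have h1 : ∑ t : kˣ, (((u * t) ^ e : kˣ) : k) = S :=
    Equiv.sum_comp (Equiv.mulLeft u) (fun t => ((t ^ e : kˣ) : k))
  have h2 : ∑ t : kˣ, (((u * t) ^ e : kˣ) : k) = ((u ^ e : kˣ) : k) * S := by
    rw [hS, Finset.mul_sum]
    refine Finset.sum_congr rfl fun t _ => ?_
    rw [mul_zpow]
    push_cast
    ring
  have h3 : (((u ^ e : kˣ) : k) - 1) * S = 0 := by
    rw [sub_mul, one_mul, ← h2, h1, sub_self]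
  rcases mul_eq_zero.mp h3 with h | h
  · exfalso
    apply hu
    ext
    rw [sub_eq_zero] at h
    simpa using h
  · exact h

lemma exists_unit_zpow_ne_one (hk : 9 < Fintype.card k) {e : ℤ} (he : e ≠ 0)
    (habs : |e| ≤ 3) : ∃ u : kˣ, u ^ e ≠ 1 := by
  classical
  obtain ⟨g, hg⟩ := IsCyclic.exists_generator (α := kˣ)
  refine ⟨g, fun h => ?_⟩
  have hord : orderOf g = Fintype.card kˣ := by
    rw [← Nat.card_eq_fintype_card]
    exact orderOf_eq_card_of_forall_mem_zpowers hg
  have hdvd : (orderOf g : ℤ) ∣ e := orderOf_dvd_iff_zpow_eq_one.mpr h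
  have hle : (orderOf g : ℤ) ≤ |e| := Int.le_of_dvd (abs_pos.mpr he) ((dvd_abs _ _).mpr hdvd)
  have hcard : Fintype.card kˣ = Fintype.card k - 1 := Fintype.card_units (α := k)
  have h10 : 10 ≤ Fintype.card k := hk
  omega

lemma card_units_cast_eq_neg_one : ((Fintype.card kˣ : ℕ) : k) = -1 := by
  classical
  rw [Fintype.card_units]
  have h0 : ((Fintype.card k : ℕ) : k) = 0 := FiniteField.cast_card_eq_zero k
  have h1 : 1 ≤ Fintype.card k := Fintype.card_pos
  rw [Nat.cast_sub h1, h0, Nat.cast_one, zero_sub]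

lemma sumsq (r : k) : ∃ x y : k, x ^ 2 + y ^ 2 = r := by
  classical
  by_cases h2 : ringChar k = 2
  · have hc2 : (2 : k) = 0 := by
      have := ringChar.Nat.cast_ringChar (R := k)
      rw [h2] at this
      exact_mod_cast this
    have hinj : Function.Injective (fun x : k => x ^ 2) := by
      intro x y hxy
      simp only at hxy
      have hz : (x - y) ^ 2 = 0 := by linear_combination hxy + (y ^ 2 - x * y) * hc2
      exact sub_eq_zero.mp (sq_eq_zero_iff.mp hz)
    obtain ⟨x, hx⟩ := Finite.injective_iff_surjective.mp hinj r
    exact ⟨x, 0, by simpa using hx⟩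
  · have hodd : Fintype.card k % 2 = 1 := FiniteField.odd_card_of_char_ne_two h2
    obtain ⟨a, b, hab⟩ :=
      FiniteField.exists_root_sum_quadratic (f := (Polynomial.X ^ 2 : Polynomial k))
        (g := Polynomial.X ^ 2 - Polynomial.C r) (Polynomial.degree_X_pow 2)
        (Polynomial.degree_X_pow_sub_C (by norm_num) r) hodd
    refine ⟨a, b, ?_⟩
    have := hab
    simp only [Polynomial.eval_pow, Polynomial.eval_X, Polynomial.eval_sub,
      Polynomial.eval_C] at this
    linear_combination this

end aux


section aux2
variable {k : Type*} [Field k] [Fintype k] {n : ℕ}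

/-- diagonal matrix with entries `t ^ w a` -/
def dmat (w : Fin n → ℤ) (t : kˣ) : Matrix (Fin n) (Fin n) k :=
  Matrix.diagonal fun a => ((t ^ w a : kˣ) : k)

lemma prod_zpow_eq (t : kˣ) (w : Fin n → ℤ) :
    (∏ a : Fin n, t ^ w a) = t ^ (∑ a : Fin n, w a) := by
  induction (Finset.univ : Finset (Fin n)) using Finset.cons_induction with
  | empty => simp
  | cons a s ha ih => rw [Finset.prod_cons, Finset.sum_cons, ih, _root_.zpow_add]

lemma dmat_det (w : Fin n → ℤ) (hw : ∑ a, w a = 0) (t : kˣ) :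
    (dmat (k := k) w t).det = 1 := by
  rw [dmat, Matrix.det_diagonal]
  have : (∏ a : Fin n, ((t ^ w a : kˣ) : k)) = ((∏ a : Fin n, t ^ w a : kˣ) : k) := by
    push_cast; rfl
  rw [this, prod_zpow_eq, hw, zpow_zero, Units.val_one]

lemma dmat_mul_dmat_neg (w : Fin n → ℤ) (t : kˣ) :
    dmat (k := k) w t * dmat (-w) t = 1 := by
  rw [dmat, dmat, Matrix.diagonal_mul_diagonal]
  have hfun : (fun a => ((t ^ w a : kˣ) : k) * ((t ^ (-w) a : kˣ) : k)) = fun _ => (1 : k) := by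
    funext a
    rw [← Units.val_mul, ← _root_.zpow_add]
    simp
  rw [hfun, Matrix.diagonal_one]

variable {V : AddSubgroup (Matrix (Fin n) (Fin n) k)}

section withV

variable (hV : ∀ (g : Matrix.SpecialLinearGroup (Fin n) k), ∀ m ∈ V,
    (g : Matrix (Fin n) (Fin n) k) * m *
      ((g⁻¹ : Matrix.SpecialLinearGroup (Fin n) k) : Matrix (Fin n) (Fin n) k) ∈ V)

include hV

lemma conj_mem {A B : Matrix (Fin n) (Fin n) k} (hdet : A.det = 1)
    (hAB : A * B = 1) {m : Matrix (Fin n) (Fin n) k} (hm : m ∈ V) : A * m * B ∈ V := by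
  have hBdet : B.det = 1 := by
    have h := congrArg Matrix.det hAB
    rw [Matrix.det_mul, hdet, one_mul, Matrix.det_one] at h
    exact h
  set g : Matrix.SpecialLinearGroup (Fin n) k := ⟨A, hdet⟩ with hg
  set g' : Matrix.SpecialLinearGroup (Fin n) k := ⟨B, hBdet⟩ with hg'
  have h1 : g' * g = 1 := Subtype.ext (by
    show B * A = 1
    exact mul_eq_one_comm.mp hAB)
  have h2 : g' = g⁻¹ := eq_inv_of_mul_eq_one_left h1
  have h3 := hV g m hm
  rw [← h2] at h3
  exact h3

lemma trans_mem {i j : Fin n} (hij : i ≠ j) (c : k)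
    {m : Matrix (Fin n) (Fin n) k} (hm : m ∈ V) :
    Matrix.single i j c * m - m * Matrix.single i j c
      - Matrix.single i j c * m * Matrix.single i j c ∈ V := by
  have h1 : Matrix.transvection i j c * Matrix.transvection i j (-c) = 1 := by
    rw [Matrix.transvection_mul_transvection_same _ _ hij, add_neg_cancel,
      Matrix.transvection_zero]
  have h2 := conj_mem hV (Matrix.det_transvection_of_ne i j hij c) h1 hm
  have h3 := V.sub_mem h2 hm
  have hneg : Matrix.single i j (-c) = -Matrix.single i j c := by
    ext a b
    simp only [Matrix.single, Matrix.of_apply, Matrix.neg_apply]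
    split <;> simp
  have heq : Matrix.transvection i j c * m * Matrix.transvection i j (-c) - m =
      Matrix.single i j c * m - m * Matrix.single i j c
        - Matrix.single i j c * m * Matrix.single i j c := by
    rw [Matrix.transvection, Matrix.transvection, hneg]
    noncomm_ring
  rwa [heq] at h3

lemma avg_mem (hk : 9 < Fintype.card k) (w : Fin n → ℤ) (hw0 : ∑ a, w a = 0)
    (hw : ∀ a b : Fin n, w a ≠ w b → |w a - w b| ≤ 3)
    {m : Matrix (Fin n) (Fin n) k} (hm : m ∈ V) :
    (Matrix.of fun a b => if w a = w b then m a b else 0) ∈ V := by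
  classical
  have hwneg : ∑ a, (-w) a = 0 := by simp [hw0]
  have hconj : ∀ t : kˣ, dmat w t * m * dmat (-w) t ∈ V := fun t =>
    conj_mem hV (dmat_det w hw0 t) (dmat_mul_dmat_neg w t) hm
  have hsum : (∑ t : kˣ, dmat w t * m * dmat (-w) t) ∈ V :=
    AddSubgroup.sum_mem V (fun t _ => hconj t)
  have key : (∑ t : kˣ, dmat (k := k) w t * m * dmat (-w) t) =
      - Matrix.of fun a b => if w a = w b then m a b else 0 := by
    ext a b
    rw [Matrix.sum_apply]
    have hterm : ∀ t : kˣ, (dmat (k := k) w t * m * dmat (-w) t) a b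
        = m a b * ((t ^ (w a - w b) : kˣ) : k) := by
      intro t
      rw [dmat, dmat, Matrix.mul_diagonal, Matrix.diagonal_mul]
      simp only [Units.val_zpow_eq_zpow_val, Pi.neg_apply]
      rw [_root_.zpow_sub₀ (Units.ne_zero t), _root_.zpow_neg]
      field_simp
    rw [Finset.sum_congr rfl (fun t _ => hterm t), ← Finset.mul_sum]
    by_cases hab : w a = w b
    · have : ∀ t : kˣ, ((t ^ (w a - w b) : kˣ) : k) = 1 := by
        intro t; rw [hab, sub_self, zpow_zero, Units.val_one]
      rw [Finset.sum_congr rfl (fun t _ => this t)]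
      simp only [Finset.sum_const, Finset.card_univ, nsmul_eq_mul, mul_one]
      rw [card_units_cast_eq_neg_one]
      simp [hab]
    · rw [sum_zpow_eq_zero' (exists_unit_zpow_ne_one hk (sub_ne_zero.mpr hab) (hw a b hab))]
      simp [hab]
  rw [key] at hsum
  simpa using V.neg_mem hsum

end withV
end aux2
lemma stdBasisMatrix_neg' {k : Type*} [Field k] {n : ℕ} (i j : Fin n) (c : k) :
    Matrix.single i j (-c) = - Matrix.single i j c := by
  ext a b
  simp only [Matrix.single, Matrix.of_apply, Matrix.neg_apply]
  split <;> simp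

section aux3
variable {k : Type*} [Field k] [Fintype k] {n : ℕ}
variable {V : AddSubgroup (Matrix (Fin n) (Fin n) k)}
variable (hV : ∀ (g : Matrix.SpecialLinearGroup (Fin n) k), ∀ m ∈ V,
    (g : Matrix (Fin n) (Fin n) k) * m *
      ((g⁻¹ : Matrix.SpecialLinearGroup (Fin n) k) : Matrix (Fin n) (Fin n) k) ∈ V)

include hV

lemma split_mem (hk : 9 < Fintype.card k) {p q : Fin n} (hpq : p ≠ q)
    {D : Matrix (Fin n) (Fin n) k} (hD : ∀ a b, a ≠ b → D a b = 0) {β : k}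
    (hy : D + Matrix.single p q β ∈ V) :
    Matrix.single p q β ∈ V ∧ D ∈ V := by
  classical
  set w : Fin n → ℤ := fun a => (if a = p then 1 else 0) - (if a = q then 1 else 0) with hwdef
  have hw0 : ∑ a, w a = 0 := by simp [hwdef, Finset.sum_sub_distrib]
  have hw3 : ∀ a b : Fin n, w a ≠ w b → |w a - w b| ≤ 3 := by
    intro a b _
    simp only [hwdef]
    split_ifs <;> norm_num
  have hwp : w p = 1 := by simp [hwdef, hpq]
  have hwq : w q = -1 := by simp [hwdef, Ne.symm hpq]
  have h1 := avg_mem hV hk w hw0 hw3 hy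
  have hPD : (Matrix.of fun a b => if w a = w b then (D + Matrix.single p q β) a b else 0)
      = D := by
    ext a b
    simp only [Matrix.of_apply, Matrix.add_apply]
    by_cases hab : a = b
    · subst hab
      rw [if_pos rfl,
        Matrix.single_apply_of_ne _ _ _ _ _ (by rintro ⟨rfl, rfl⟩; exact hpq rfl),
        add_zero]
    · by_cases hwab : w a = w b
      · rw [if_pos hwab, hD a b hab,
          Matrix.single_apply_of_ne _ _ _ _ _
            (by rintro ⟨rfl, rfl⟩; rw [hwp, hwq] at hwab; norm_num at hwab),
          add_zero]
      · rw [if_neg hwab, hD a b hab]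
  rw [hPD] at h1
  have h2 := V.sub_mem hy h1
  rw [add_sub_cancel_left] at h2
  exact ⟨h2, h1⟩

lemma dconj_mem (hk : 9 < Fintype.card k) {i j : Fin n} (hij : i ≠ j) (t : kˣ) (γ : k)
    (h : Matrix.single i j γ ∈ V) : Matrix.single i j ((t : k) ^ 2 * γ) ∈ V := by
  classical
  set w : Fin n → ℤ := fun a => (if a = i then 1 else 0) - (if a = j then 1 else 0) with hwdef
  have hw0 : ∑ a, w a = 0 := by simp [hwdef, Finset.sum_sub_distrib]
  have hc := conj_mem hV (dmat_det w hw0 t) (dmat_mul_dmat_neg w t) h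
  have heq : dmat w t * Matrix.single i j γ * dmat (-w) t
      = Matrix.single i j ((t : k) ^ 2 * γ) := by
    rw [dmat, dmat]
    ext a b
    rw [Matrix.mul_diagonal, Matrix.diagonal_mul]
    by_cases hab : i = a ∧ j = b
    · obtain ⟨rfl, rfl⟩ := hab
      rw [Matrix.single_apply_same, Matrix.single_apply_same]
      have hwi : w i = 1 := by simp [hwdef, hij]
      have hwj : (-w) j = 1 := by simp [hwdef, Ne.symm hij]
      rw [hwi, hwj, zpow_one]
      ring
    · rw [Matrix.single_apply_of_ne _ _ _ _ _ hab,
        Matrix.single_apply_of_ne _ _ _ _ _ hab, mul_zero, zero_mul]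
  rw [heq] at hc
  exact hc

lemma pair_full (hk : 9 < Fintype.card k) {i j : Fin n} (hij : i ≠ j) {γ : k} (hγ : γ ≠ 0)
    (h : Matrix.single i j γ ∈ V) : ∀ δ : k, Matrix.single i j δ ∈ V := by
  classical
  have hsq : ∀ x : k, Matrix.single i j (x ^ 2 * γ) ∈ V := by
    intro x
    rcases eq_or_ne x 0 with rfl | hx
    · simpa using V.zero_mem
    · simpa using dconj_mem hV hk hij (Units.mk0 x hx) γ h
  intro δ
  obtain ⟨x, y, hxy⟩ := sumsq (δ * γ⁻¹)
  have hmem := V.add_mem (hsq x) (hsq y)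
  rw [← Matrix.single_add] at hmem
  have hval : x ^ 2 * γ + y ^ 2 * γ = δ := by
    have h1 : (x ^ 2 + y ^ 2) * γ = δ * γ⁻¹ * γ := by rw [hxy]
    rw [inv_mul_cancel_right₀ hγ] at h1
    linear_combination h1
  rwa [hval] at hmem

lemma swap_diag_mem (hk : 9 < Fintype.card k) {i j : Fin n} (hij : i ≠ j) (α c : k)
    (hA : Matrix.single i j α ∈ V) :
    Matrix.single j i (c * α * c) ∈ V ∧
      Matrix.single j j (c * α) - Matrix.single i i (α * c) ∈ V := by
  have hy := trans_mem hV hij.symm c hA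
  rw [Matrix.single_mul_single_same, Matrix.single_mul_single_same,
    Matrix.single_mul_single_same] at hy
  have hy' : (Matrix.single j j (c * α) - Matrix.single i i (α * c))
      + Matrix.single j i (-(c * α * c)) ∈ V := by
    rw [stdBasisMatrix_neg', ← sub_eq_add_neg]
    exact hy
  have hD : ∀ a b, a ≠ b →
      (Matrix.single j j (c * α) - Matrix.single i i (α * c)) a b = 0 := by
    intro a b hab
    rw [Matrix.sub_apply,
      Matrix.single_apply_of_ne _ _ _ _ _ (by rintro ⟨rfl, rfl⟩; exact hab rfl),
      Matrix.single_apply_of_ne _ _ _ _ _ (by rintro ⟨rfl, rfl⟩; exact hab rfl),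
      sub_zero]
  obtain ⟨h1, h2⟩ := split_mem hV hk hij.symm hD hy'
  rw [stdBasisMatrix_neg'] at h1
  have h1' := V.neg_mem h1
  rw [neg_neg] at h1'
  exact ⟨h1', h2⟩

lemma pair_S2 {i j l : Fin n} (hjl : j ≠ l) (hil : i ≠ l)
    (δ : k) (hA : Matrix.single i j δ ∈ V) : Matrix.single i l δ ∈ V := by
  have hy := trans_mem hV hjl (1 : k) hA
  rw [Matrix.single_mul_single_of_ne (1:k) j l _ hil.symm δ,
    Matrix.single_mul_single_same δ i j l (1:k), zero_mul, zero_sub, sub_zero] at hy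
  have := V.neg_mem hy
  rw [neg_neg] at this
  simpa using this

lemma pair_S3 {i j l : Fin n} (hli : l ≠ i) (hlj : l ≠ j)
    (δ : k) (hA : Matrix.single i j δ ∈ V) : Matrix.single l j δ ∈ V := by
  have hy := trans_mem hV hli (1 : k) hA
  rw [Matrix.single_mul_single_same (1:k) l i j δ,
    Matrix.single_mul_single_of_ne δ i j _ hlj.symm (1:k),
    Matrix.single_mul_single_of_ne ((1:k)*δ) l j _ hlj.symm (1:k), sub_zero, sub_zero] at hy
  simpa using hy

lemma pair_propagate (hk : 9 < Fintype.card k) {i j : Fin n} (hij : i ≠ j)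
    (hfull : ∀ δ : k, Matrix.single i j δ ∈ V) :
    ∀ p q : Fin n, p ≠ q → ∀ δ : k, Matrix.single p q δ ∈ V := by
  have hswap : ∀ (p q : Fin n), p ≠ q → (∀ δ : k, Matrix.single p q δ ∈ V) →
      ∀ δ : k, Matrix.single q p δ ∈ V := by
    intro p q hpq hf δ
    have := (swap_diag_mem hV hk hpq δ 1 (hf δ)).1
    simpa using this
  have hiq : ∀ q : Fin n, q ≠ i → ∀ δ : k, Matrix.single i q δ ∈ V := by
    intro q hqi δ
    rcases eq_or_ne q j with rfl | hqj
    · exact hfull δ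
    · exact pair_S2 hV (Ne.symm hqj) (Ne.symm hqi) δ (hfull δ)
  intro p q hpq δ
  by_cases hqi : q = i
  · rw [hqi]
    have hpi : p ≠ i := fun h => hpq (h.trans hqi.symm)
    exact hswap i p (Ne.symm hpi) (hiq p hpi) δ
  · by_cases hpi : p = i
    · rw [hpi]
      exact hiq q hqi δ
    · exact pair_S3 hV hpi hpq δ (hiq q hqi δ)

end aux3
section aux4
variable {k : Type*} [Field k] [Fintype k] {n : ℕ}
variable {V : AddSubgroup (Matrix (Fin n) (Fin n) k)}
variable (hV : ∀ (g : Matrix.SpecialLinearGroup (Fin n) k), ∀ m ∈ V,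
    (g : Matrix (Fin n) (Fin n) k) * m *
      ((g⁻¹ : Matrix.SpecialLinearGroup (Fin n) k) : Matrix (Fin n) (Fin n) k) ∈ V)

include hV

lemma extract_pair (hk : 9 < Fintype.card k) (hn : 2 ≤ n) {i j : Fin n} (hij : i ≠ j)
    {m : Matrix (Fin n) (Fin n) k} (hm : m ∈ V) :
    Matrix.single i j (m i j) + Matrix.single j i (m j i) ∈ V := by
  classical
  set w : Fin n → ℤ := fun a => (if a = i then 1 else 0) - (if a = j then 1 else 0) with hwdef
  have hw0 : ∑ a, w a = 0 := by simp [hwdef, Finset.sum_sub_distrib]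
  have hw3 : ∀ a b : Fin n, w a ≠ w b → |w a - w b| ≤ 3 := by
    intro a b _
    simp only [hwdef]
    split_ifs <;> norm_num
  have hm1mem : m - Matrix.of (fun a b => if w a = w b then m a b else 0) ∈ V :=
    V.sub_mem hm (avg_mem hV hk w hw0 hw3 hm)
  set m1 := m - Matrix.of (fun a b => if w a = w b then m a b else 0) with hm1def
  have hwi : w i = 1 := by simp [hwdef, hij]
  have hwj : w j = -1 := by simp [hwdef, Ne.symm hij]
  have hm1ij : m1 i j = m i j := by
    rw [hm1def, Matrix.sub_apply, Matrix.of_apply, if_neg (by rw [hwi, hwj]; norm_num), sub_zero]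
  have hm1ji : m1 j i = m j i := by
    rw [hm1def, Matrix.sub_apply, Matrix.of_apply, if_neg (by rw [hwi, hwj]; norm_num), sub_zero]
  have hm1other : ∀ a b : Fin n, w a = w b → m1 a b = 0 := by
    intro a b h
    rw [hm1def, Matrix.sub_apply, Matrix.of_apply, if_pos h, sub_self]
  have hm1diag : ∀ a : Fin n, m1 a a = 0 := fun a => hm1other a a rfl
  rcases Nat.lt_or_ge n 3 with h3 | h3
  · -- n = 2 case
    have hn2 : n = 2 := by omega
    have hmem2 : ∀ a : Fin n, a = i ∨ a = j := by
      intro a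
      by_contra hcon
      push_neg at hcon
      have hcard : ({i, j, a} : Finset (Fin n)).card = 3 := by
        rw [Finset.card_insert_of_notMem (by simp [hij, Ne.symm hcon.1]),
          Finset.card_insert_of_notMem (by simp [Ne.symm hcon.2]), Finset.card_singleton]
      have hle := Finset.card_le_univ ({i, j, a} : Finset (Fin n))
      rw [hcard, Fintype.card_fin, hn2] at hle
      omega
    have heq : m1 = Matrix.single i j (m i j) + Matrix.single j i (m j i) := by
      ext a b
      rw [Matrix.add_apply]
      by_cases hai : a = i
      · by_cases hbj : b = j
        · rw [hai, hbj, hm1ij, Matrix.single_apply_same,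
            Matrix.single_apply_of_ne _ _ _ _ _ (fun h => hij h.2)]
          norm_num
        · have hbi : b = i := (hmem2 b).resolve_right hbj
          rw [hai, hbi, hm1diag i,
            Matrix.single_apply_of_ne _ _ _ _ _ (fun h => hij h.2.symm),
            Matrix.single_apply_of_ne _ _ _ _ _ (fun h => hij h.1.symm)]
          norm_num
      · have haj : a = j := (hmem2 a).resolve_left hai
        by_cases hbi : b = i
        · rw [haj, hbi, hm1ji, Matrix.single_apply_same,
            Matrix.single_apply_of_ne _ _ _ _ _ (fun h => hij h.1)]
          norm_num
        · have hbj : b = j := (hmem2 b).resolve_left hbi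
          rw [haj, hbj, hm1diag j,
            Matrix.single_apply_of_ne _ _ _ _ _ (fun h => hij h.1),
            Matrix.single_apply_of_ne _ _ _ _ _ (fun h => hij h.2)]
          norm_num
    rw [← heq]
    exact hm1mem
  · -- n ≥ 3 case : pick a third index l
    have hex : ∃ l : Fin n, l ≠ i ∧ l ≠ j := by
      by_contra hcon
      push_neg at hcon
      have hsub : (Finset.univ : Finset (Fin n)) ⊆ {i, j} := by
        intro x _
        simp only [Finset.mem_insert, Finset.mem_singleton]
        rcases eq_or_ne x i with rfl | hxi
        · exact Or.inl rfl
        · exact Or.inr (hcon x hxi)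
      have hcard := Finset.card_le_card hsub
      have h2 : ({i, j} : Finset (Fin n)).card ≤ 2 := by
        refine le_trans (Finset.card_insert_le _ _) ?_
        simp
      rw [Finset.card_univ, Fintype.card_fin] at hcard
      omega
    obtain ⟨l, hli, hlj⟩ := hex
    set v : Fin n → ℤ := fun a =>
      (if a = i then 1 else 0) + (if a = j then 1 else 0) - (if a = l then 2 else 0) with hvdef
    have hv0 : ∑ a, v a = 0 := by
      simp [hvdef, Finset.sum_sub_distrib, Finset.sum_add_distrib]
    have hvi : v i = 1 := by simp [hvdef, hij, Ne.symm hli]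
    have hvj : v j = 1 := by simp [hvdef, Ne.symm hij, Ne.symm hlj]
    have hvl : v l = -2 := by simp [hvdef, hli, hlj]
    have hvo : ∀ a : Fin n, a ≠ i → a ≠ j → a ≠ l → v a = 0 := by
      intro a h1 h2 h3; simp [hvdef, h1, h2, h3]
    have hvval : ∀ a : Fin n, v a = 1 ∨ v a = -2 ∨ v a = 0 := by
      intro a
      rcases eq_or_ne a i with rfl | hai
      · exact Or.inl hvi
      rcases eq_or_ne a j with rfl | haj
      · exact Or.inl hvj
      rcases eq_or_ne a l with rfl | hal
      · exact Or.inr (Or.inl hvl)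
      · exact Or.inr (Or.inr (hvo a hai haj hal))
    have hv3 : ∀ a b : Fin n, v a ≠ v b → |v a - v b| ≤ 3 := by
      intro a b _
      rcases hvval a with h | h | h <;> rcases hvval b with h' | h' | h' <;>
        rw [h, h'] <;> norm_num
    have hvone : ∀ a : Fin n, v a = 1 → a = i ∨ a = j := by
      intro a h
      by_contra hcon
      push_neg at hcon
      rcases eq_or_ne a l with rfl | hal
      · rw [hvl] at h; norm_num at h
      · rw [hvo a hcon.1 hcon.2 hal] at h; norm_num at h
    have hm2mem := avg_mem hV hk v hv0 hv3 hm1mem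
    have heq : (Matrix.of fun a b => if v a = v b then m1 a b else 0)
        = Matrix.single i j (m i j) + Matrix.single j i (m j i) := by
      ext a b
      rw [Matrix.of_apply, Matrix.add_apply]
      by_cases hab : a = b
      · subst hab
        rw [if_pos rfl, hm1diag a,
          Matrix.single_apply_of_ne _ _ _ _ _ (by rintro ⟨rfl, rfl⟩; exact hij rfl),
          Matrix.single_apply_of_ne _ _ _ _ _ (by rintro ⟨rfl, rfl⟩; exact hij rfl)]
        norm_num
      · by_cases hvav : v a = v b
        · rw [if_pos hvav]
          rcases hvval a with ha | ha | ha
          · have hb : v b = 1 := by rw [← hvav]; exact ha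
            rcases hvone a ha with rfl | rfl <;> rcases hvone b hb with rfl | rfl
            · exact absurd rfl hab
            · rw [hm1ij, Matrix.single_apply_same,
                Matrix.single_apply_of_ne _ _ _ _ _ (by rintro ⟨rfl, h⟩; exact hij rfl)]
              norm_num
            · rw [hm1ji, Matrix.single_apply_same,
                Matrix.single_apply_of_ne _ _ _ _ _ (by rintro ⟨rfl, h⟩; exact hij rfl)]
              norm_num
            · exact absurd rfl hab
          · -- v a = -2 → a = l and b = l, contradiction with a ≠ b
            have hb : v b = -2 := by rw [← hvav]; exact ha
            have hal : a = l := by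
              by_contra hal
              rcases hvval a with h | h | h
              · rw [h] at ha; norm_num at ha
              · rcases eq_or_ne a i with rfl | hai
                · rw [hvi] at ha; norm_num at ha
                · rcases eq_or_ne a j with rfl | haj
                  · rw [hvj] at ha; norm_num at ha
                  · rw [hvo a hai haj hal] at ha; norm_num at ha
              · rw [h] at ha; norm_num at ha
            have hbl : b = l := by
              by_contra hbl
              rcases eq_or_ne b i with rfl | hbi
              · rw [hvi] at hb; norm_num at hb
              · rcases eq_or_ne b j with rfl | hbj
                · rw [hvj] at hb; norm_num at hb
                · rw [hvo b hbi hbj hbl] at hb; norm_num at hb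
            exact absurd (hal.trans hbl.symm) hab
          · -- v a = 0 : a,b ∉ {i,j}: w a = w b = 0
            have hb : v b = 0 := by rw [← hvav]; exact ha
            have hai : a ≠ i := fun h => by rw [h, hvi] at ha; norm_num at ha
            have haj : a ≠ j := fun h => by rw [h, hvj] at ha; norm_num at ha
            have hbi : b ≠ i := fun h => by rw [h, hvi] at hb; norm_num at hb
            have hbj : b ≠ j := fun h => by rw [h, hvj] at hb; norm_num at hb
            have hwa : w a = 0 := by simp [hwdef, hai, haj]
            have hwb : w b = 0 := by simp [hwdef, hbi, hbj]
            rw [hm1other a b (by rw [hwa, hwb]),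
              Matrix.single_apply_of_ne _ _ _ _ _ (by rintro ⟨rfl, rfl⟩; exact hai rfl),
              Matrix.single_apply_of_ne _ _ _ _ _ (by rintro ⟨rfl, rfl⟩; exact hbi rfl)]
            norm_num
        · rw [if_neg hvav,
            Matrix.single_apply_of_ne _ _ _ _ _
              (by rintro ⟨rfl, rfl⟩; rw [hvi, hvj] at hvav; exact hvav rfl),
            Matrix.single_apply_of_ne _ _ _ _ _
              (by rintro ⟨rfl, rfl⟩; rw [hvi, hvj] at hvav; exact hvav rfl)]
          norm_num
    rw [heq] at hm2mem
    exact hm2mem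

end aux4
section aux5
variable {k : Type*} [Field k] [Fintype k] {n : ℕ}
variable {V : AddSubgroup (Matrix (Fin n) (Fin n) k)}
variable (hV : ∀ (g : Matrix.SpecialLinearGroup (Fin n) k), ∀ m ∈ V,
    (g : Matrix (Fin n) (Fin n) k) * m *
      ((g⁻¹ : Matrix.SpecialLinearGroup (Fin n) k) : Matrix (Fin n) (Fin n) k) ∈ V)

include hV

lemma seed_exists (hk : 9 < Fintype.card k) (hn : 2 ≤ n)
    {m : Matrix (Fin n) (Fin n) k} (hm : m ∈ V)
    (hns : ¬ ∃ c : k, m = c • (1 : Matrix (Fin n) (Fin n) k)) :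
    ∃ (p q : Fin n) (γ : k), p ≠ q ∧ γ ≠ 0 ∧ Matrix.single p q γ ∈ V := by
  classical
  by_cases hoff : ∃ a b : Fin n, a ≠ b ∧ m a b ≠ 0
  · obtain ⟨i, j, hij, hne0⟩ := hoff
    have hT := extract_pair hV hk hn hij hm
    have hy := trans_mem hV hij.symm (1 : k) hT
    have hE1 : Matrix.single j i (1:k) * (Matrix.single i j (m i j) + Matrix.single j i (m j i))
        = Matrix.single j j (m i j) := by
      rw [mul_add, Matrix.single_mul_single_same (1:k) j i j (m i j),
        Matrix.single_mul_single_of_ne (1:k) j i _ hij (m j i), add_zero, one_mul]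
    have hE2 : (Matrix.single i j (m i j) + Matrix.single j i (m j i)) * Matrix.single j i (1:k)
        = Matrix.single i i (m i j) := by
      rw [add_mul, Matrix.single_mul_single_same (m i j) i j i (1:k),
        Matrix.single_mul_single_of_ne (m j i) j i _ hij (1:k), add_zero, mul_one]
    rw [hE1, hE2, Matrix.single_mul_single_same (m i j) j j i (1:k), mul_one] at hy
    have hy' : (Matrix.single j j (m i j) - Matrix.single i i (m i j))
        + Matrix.single j i (-(m i j)) ∈ V := by
      rw [stdBasisMatrix_neg', ← sub_eq_add_neg]
      exact hy
    have hD : ∀ a b, a ≠ b →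
        (Matrix.single j j (m i j) - Matrix.single i i (m i j)) a b = 0 := by
      intro a b hab
      rw [Matrix.sub_apply,
        Matrix.single_apply_of_ne _ _ _ _ _ (by rintro ⟨rfl, rfl⟩; exact hab rfl),
        Matrix.single_apply_of_ne _ _ _ _ _ (by rintro ⟨rfl, rfl⟩; exact hab rfl),
        sub_zero]
    obtain ⟨h1, _⟩ := split_mem hV hk hij.symm hD hy'
    rw [stdBasisMatrix_neg'] at h1
    have h1' := V.neg_mem h1
    rw [neg_neg] at h1'
    exact ⟨j, i, m i j, hij.symm, hne0, h1'⟩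
  · push_neg at hoff
    have hzero : 0 < n := by omega
    have hd : ∃ i j : Fin n, m i i ≠ m j j := by
      by_contra hcon
      push_neg at hcon
      apply hns
      refine ⟨m ⟨0, hzero⟩ ⟨0, hzero⟩, ?_⟩
      ext a b
      rcases eq_or_ne a b with rfl | hab
      · rw [Matrix.smul_apply, Matrix.one_apply_eq, smul_eq_mul, mul_one]
        exact hcon a ⟨0, hzero⟩
      · rw [Matrix.smul_apply, Matrix.one_apply_ne hab, smul_eq_mul, mul_zero]
        exact hoff a b hab
    obtain ⟨i, j, hij'⟩ := hd
    have hij : i ≠ j := by rintro rfl; exact hij' rfl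
    have hy := trans_mem hV hij (1 : k) hm
    have h1 : Matrix.single i j (1:k) * m = Matrix.single i j (m j j) := by
      ext a b
      by_cases hai : a = i
      · subst hai
        rw [Matrix.single_mul_apply_same, one_mul]
        by_cases hbj : b = j
        · subst hbj
          rw [Matrix.single_apply_same]
        · rw [Matrix.single_apply_of_ne _ _ _ _ _ (by rintro ⟨h1, rfl⟩; exact hbj rfl)]
          exact hoff j b (fun h => hbj h.symm)
      · rw [Matrix.single_mul_apply_of_ne _ _ _ _ _ hai,
          Matrix.single_apply_of_ne _ _ _ _ _ (by rintro ⟨rfl, rfl⟩; exact hai rfl)]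
    have h2 : m * Matrix.single i j (1:k) = Matrix.single i j (m i i) := by
      ext a b
      by_cases hbj : b = j
      · subst hbj
        rw [Matrix.mul_single_apply_same, mul_one]
        by_cases hai : a = i
        · subst hai
          rw [Matrix.single_apply_same]
        · rw [Matrix.single_apply_of_ne _ _ _ _ _ (by rintro ⟨rfl, h⟩; exact hai rfl)]
          exact hoff a i hai
      · rw [Matrix.mul_single_apply_of_ne _ _ _ _ _ hbj,
          Matrix.single_apply_of_ne _ _ _ _ _ (by rintro ⟨rfl, rfl⟩; exact hbj rfl)]
    have h3 : Matrix.single i j (1:k) * m * Matrix.single i j (1:k) = 0 := by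
      rw [h1, Matrix.single_mul_single_of_ne (m j j) i j _ hij.symm (1:k)]
    rw [h3, h1, h2, sub_zero] at hy
    have heq : Matrix.single i j (m j j - m i i)
        = Matrix.single i j (m j j) - Matrix.single i j (m i i) := by
      rw [sub_eq_add_neg, Matrix.single_add, stdBasisMatrix_neg', ← sub_eq_add_neg]
    rw [← heq] at hy
    exact ⟨i, j, m j j - m i i, hij, sub_ne_zero.mpr (Ne.symm hij'), hy⟩

end aux5
/-- The submodule of scalar matrices in `gl_n(k)`. -/
noncomputable def scalarMatrices (n : ℕ) (k : Type*) [Field k] :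
    Submodule k (Matrix (Fin n) (Fin n) k) :=
  Submodule.span k {(1 : Matrix (Fin n) (Fin n) k)}

/-- `pgl_n(k) := gl_n(k)/(scalars)`.  Every nonzero additive subgroup of `pgl_n(k)` invariant
under conjugation by `SL_n(k)` contains `psl_n(k)`, the image of the trace-zero matrices. -/
theorem stmt7 {n : ℕ} (hn : 2 ≤ n) (k : Type*) [Field k] [Fintype k]
    (hk : 9 < Fintype.card k)
    (H : AddSubgroup (Matrix (Fin n) (Fin n) k ⧸ scalarMatrices n k))
    (hne : H ≠ ⊥)
    (hinv : ∀ g : Matrix.SpecialLinearGroup (Fin n) k,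
      ∀ m : Matrix (Fin n) (Fin n) k, Submodule.Quotient.mk m ∈ H →
        (Submodule.Quotient.mk ((g : Matrix (Fin n) (Fin n) k) * m *
          ((g⁻¹ : Matrix.SpecialLinearGroup (Fin n) k) : Matrix (Fin n) (Fin n) k)) :
            Matrix (Fin n) (Fin n) k ⧸ scalarMatrices n k) ∈ H) :
    ∀ m : Matrix (Fin n) (Fin n) k, Matrix.trace m = 0 →
      (Submodule.Quotient.mk m : Matrix (Fin n) (Fin n) k ⧸ scalarMatrices n k) ∈ H := by
  classical
  intro m htr
  set V : AddSubgroup (Matrix (Fin n) (Fin n) k) :=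
    AddSubgroup.comap (Submodule.mkQ (scalarMatrices n k)).toAddMonoidHom H with hVdef
  have hmemV : ∀ x : Matrix (Fin n) (Fin n) k,
      x ∈ V ↔ (Submodule.Quotient.mk x : Matrix (Fin n) (Fin n) k ⧸ scalarMatrices n k) ∈ H :=
    fun x => Iff.rfl
  have hV : ∀ (g : Matrix.SpecialLinearGroup (Fin n) k), ∀ x ∈ V,
      (g : Matrix (Fin n) (Fin n) k) * x *
        ((g⁻¹ : Matrix.SpecialLinearGroup (Fin n) k) : Matrix (Fin n) (Fin n) k) ∈ V := by
    intro g x hx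
    exact (hmemV _).mpr (hinv g x ((hmemV x).mp hx))
  have hex : ∃ y : Matrix (Fin n) (Fin n) k ⧸ scalarMatrices n k, y ∈ H ∧ y ≠ 0 := by
    by_contra hcon
    push_neg at hcon
    apply hne
    ext y
    simp only [AddSubgroup.mem_bot]
    exact ⟨fun hy => hcon y hy, fun hy => hy ▸ H.zero_mem⟩
  obtain ⟨y, hyH, hy0⟩ := hex
  obtain ⟨m₀, rfl⟩ := Submodule.Quotient.mk_surjective _ y
  have hm₀V : m₀ ∈ V := (hmemV _).mpr hyH
  have hm₀ns : ¬ ∃ c : k, m₀ = c • (1 : Matrix (Fin n) (Fin n) k) := by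
    rintro ⟨c, rfl⟩
    apply hy0
    rw [Submodule.Quotient.mk_eq_zero]
    exact Submodule.smul_mem _ c (Submodule.mem_span_singleton_self _)
  obtain ⟨p, q, γ, hpq, hγ, hseed⟩ := seed_exists hV hk hn hm₀V hm₀ns
  have hfull0 : ∀ δ : k, Matrix.single p q δ ∈ V := pair_full hV hk hpq hγ hseed
  have hall : ∀ a b : Fin n, a ≠ b → ∀ δ : k, Matrix.single a b δ ∈ V :=
    pair_propagate hV hk hpq hfull0
  set i₀ : Fin n := ⟨0, by omega⟩ with hi0
  have hdiag : ∀ (a : Fin n) (δ : k), Matrix.single a a δ - Matrix.single i₀ i₀ δ ∈ V := by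
    intro a δ
    rcases eq_or_ne a i₀ with rfl | ha
    · simpa using V.zero_mem
    · have := (swap_diag_mem hV hk (Ne.symm ha) δ 1 (hall i₀ a (Ne.symm ha) δ)).2
      simpa using this
  rw [← hmemV]
  have hsecond : (∑ a : Fin n, Matrix.single a a (m a a))
      = ∑ a : Fin n, (Matrix.single a a (m a a) - Matrix.single i₀ i₀ (m a a)) := by
    have hconst : (∑ a : Fin n, Matrix.single i₀ i₀ (m a a)) = 0 := by
      have hstd : (∑ a : Fin n, Matrix.single i₀ i₀ (m a a))
          = Matrix.single i₀ i₀ (∑ a : Fin n, m a a) := by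
        ext x y
        rw [Matrix.sum_apply]
        by_cases hxy : i₀ = x ∧ i₀ = y
        · obtain ⟨rfl, rfl⟩ := hxy
          simp
        · rw [Matrix.single_apply_of_ne _ _ _ _ _ hxy]
          exact Finset.sum_eq_zero fun a _ =>
            Matrix.single_apply_of_ne _ _ _ _ _ hxy
      have htr' : (∑ a : Fin n, m a a) = 0 := htr
      rw [hstd, htr', Matrix.single_zero]
    rw [Finset.sum_sub_distrib, hconst, sub_zero]
  have hdecomp : m = (∑ a : Fin n, ∑ b : Fin n, if a = b then 0 else Matrix.single a b (m a b))
      + ∑ a : Fin n, (Matrix.single a a (m a a) - Matrix.single i₀ i₀ (m a a)) := by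
    have hsplit : ∀ a : Fin n, (∑ b : Fin n, Matrix.single a b (m a b))
        = (∑ b : Fin n, if a = b then 0 else Matrix.single a b (m a b))
          + Matrix.single a a (m a a) := by
      intro a
      have hterm : ∀ b : Fin n, Matrix.single a b (m a b)
          = (if a = b then 0 else Matrix.single a b (m a b))
            + (if a = b then Matrix.single a b (m a b) else 0) := by
        intro b
        split <;> simp
      rw [Finset.sum_congr rfl (fun b _ => hterm b), Finset.sum_add_distrib,
        Finset.sum_ite_eq Finset.univ a (fun b => Matrix.single a b (m a b))]
      simp
    calc m = ∑ a : Fin n, ∑ b : Fin n, Matrix.single a b (m a b) :=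
          Matrix.matrix_eq_sum_single m
      _ = ∑ a : Fin n, ((∑ b : Fin n, if a = b then 0 else Matrix.single a b (m a b))
            + Matrix.single a a (m a a)) := Finset.sum_congr rfl (fun a _ => hsplit a)
      _ = (∑ a : Fin n, ∑ b : Fin n, if a = b then 0 else Matrix.single a b (m a b))
            + ∑ a : Fin n, Matrix.single a a (m a a) := Finset.sum_add_distrib
      _ = (∑ a : Fin n, ∑ b : Fin n, if a = b then 0 else Matrix.single a b (m a b))
            + ∑ a : Fin n, (Matrix.single a a (m a a) - Matrix.single i₀ i₀ (m a a)) := by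
          rw [hsecond]
  rw [hdecomp]
  refine V.add_mem
    (AddSubgroup.sum_mem V fun a _ => AddSubgroup.sum_mem V fun b _ => ?_)
    (AddSubgroup.sum_mem V fun a _ => hdiag a (m a a))
  by_cases hab : a = b
  · rw [if_pos hab]
    exact V.zero_mem
  · rw [if_neg hab]
    exact hall a b hab (m a b)
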